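/- arXiv:1906.07746 — 2 statements merged into one kernel-verified Lean document; each statement's English description precedes it below -/
import Mathlib

section
/- Let R be a Root barrier, i.e. a closed subset of [0,∞]×[-∞,∞] such that (t,x)∈R implies (s,x)∈R for all s≥t, (+∞,x)∈R for all x, and [0,∞]×{-∞,+∞}⊆R. Then the barrier function r(x) = inf{t ≥ 0 : (t,x) ∈ R} is lower semi-continuous on [-∞,+∞]. -/
open ENNReal

/-- A Root barrier: a closed subset of `[0,∞] × [-∞,∞]` which is right-closed in time,
contains the line at `t = ∞`, and contains the horizontal lines at `x = ±∞`. -/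
structure IsRootBarrier (R : Set (ℝ≥0∞ × EReal)) : Prop where
  closed : IsClosed R
  time_mono : ∀ t x, (t, x) ∈ R → ∀ s, t ≤ s → (s, x) ∈ R
  top_mem : ∀ x : EReal, ((⊤ : ℝ≥0∞), x) ∈ R
  infty_mem : ∀ t : ℝ≥0∞, (t, (⊥ : EReal)) ∈ R ∧ (t, (⊤ : EReal)) ∈ R

theorem root_barrier_function_lowerSemicontinuous
    (R : Set (ℝ≥0∞ × EReal)) (hR : IsRootBarrier R) :
    LowerSemicontinuous (fun x : EReal => sInf {t : ℝ≥0∞ | (t, x) ∈ R}) := by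
  intro x c hc
  have key : ∀ y : EReal, sInf {t : ℝ≥0∞ | (t, y) ∈ R} ≤ c ↔ (c, y) ∈ R := by
    intro y
    constructor
    · intro h
      have hcl : IsClosed {t : ℝ≥0∞ | (t, y) ∈ R} :=
        hR.closed.preimage (continuous_id.prodMk continuous_const)
      have hne : {t : ℝ≥0∞ | (t, y) ∈ R}.Nonempty := ⟨⊤, hR.top_mem y⟩
      have hmem := hcl.sInf_mem hne
      exact hR.time_mono _ y hmem c h
    · intro h; exact sInf_le h
  have hopen : IsOpen {y : EReal | (c, y) ∉ R} :=
    (hR.closed.preimage (continuous_const.prodMk continuous_id)).isOpen_compl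
  have hx : (c, x) ∉ R := fun h => absurd ((key x).mpr h) (not_le.mpr hc)
  filter_upwards [hopen.mem_nhds hx] with y hy
  exact lt_of_not_ge (fun h => hy ((key y).mp h))
end

section
/- Let r₁ : ℝ → [0,+∞] be nonnegative, and for each λ > 0 and x ∈ ℝ set r_λ(x) = λ·r₁(x/√λ). Then the map λ ↦ r_λ(x) is non-decreasing on (0,∞) for every x ∈ ℝ if and only if x ↦ r₁(x)/x² is non-decreasing on (-∞,0) and non-increasing on (0,+∞). -/
open ENNReal

private lemma key_inv (r₁ : ℝ → ℝ≥0∞) {y : ℝ} (hy : y ≠ 0) :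
    ENNReal.ofReal (1 / y ^ 2) * r₁ y = r₁ y / ENNReal.ofReal (y ^ 2) := by
  have hy2 : 0 < y ^ 2 := by positivity
  rw [one_div, ENNReal.ofReal_inv_of_pos hy2, div_eq_mul_inv, mul_comm]

private lemma key_lam (r₁ : ℝ → ℝ≥0∞) {x lam : ℝ} (hx : x ≠ 0) (hl : 0 < lam) :
    ENNReal.ofReal lam * r₁ (x / Real.sqrt lam)
      = ENNReal.ofReal (x ^ 2) * (r₁ (x / Real.sqrt lam) / ENNReal.ofReal ((x / Real.sqrt lam) ^ 2)) := by
  set y := x / Real.sqrt lam with hy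
  have hs : 0 < Real.sqrt lam := Real.sqrt_pos.mpr hl
  have hy2 : y ^ 2 = x ^ 2 / lam := by
    rw [hy, div_pow, Real.sq_sqrt hl.le]
  have hy2pos : 0 < y ^ 2 := by rw [hy2]; positivity
  have hlam : x ^ 2 / y ^ 2 = lam := by
    rw [hy2]; field_simp
  have hml : x ^ 2 * (y ^ 2)⁻¹ = lam := by rw [← div_eq_mul_inv]; exact hlam
  rw [div_eq_mul_inv, ← ENNReal.ofReal_inv_of_pos hy2pos, mul_comm (r₁ y), ← mul_assoc,
    ← ENNReal.ofReal_mul (sq_nonneg x), hml]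


/-- For `r_λ(x) = λ·r₁(x/√λ)`, the map `λ ↦ r_λ(x)` is non-decreasing on `(0,∞)` for
every `x` iff `x ↦ r₁(x)/x²` is non-decreasing on `(-∞,0)` and non-increasing on `(0,∞)`. -/
theorem root_barrier_scaling_monotone_iff (r₁ : ℝ → ℝ≥0∞) :
    (∀ x : ℝ, MonotoneOn
        (fun lam : ℝ => ENNReal.ofReal lam * r₁ (x / Real.sqrt lam)) (Set.Ioi 0)) ↔
      (MonotoneOn (fun x : ℝ => r₁ x / ENNReal.ofReal (x ^ 2)) (Set.Iio 0) ∧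
        AntitoneOn (fun x : ℝ => r₁ x / ENNReal.ofReal (x ^ 2)) (Set.Ioi 0)) := by
  constructor
  · intro h
    constructor
    · intro a ha b hb hab
      have ha' : a < 0 := ha
      have hb' : b < 0 := hb
      have ha0 : a ≠ 0 := ha'.ne
      have hb0 : b ≠ 0 := hb'.ne
      have hla : (0:ℝ) < 1 / a ^ 2 := by positivity
      have hlb : (0:ℝ) < 1 / b ^ 2 := by positivity
      have hle : 1 / a ^ 2 ≤ 1 / b ^ 2 := by
        apply one_div_le_one_div_of_le (by positivity)
        have : b ≤ a ∨ a ≤ b := le_total b a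
        nlinarith
      have hsqa : Real.sqrt (1 / a ^ 2) = |a|⁻¹ := by
        rw [one_div, Real.sqrt_inv, Real.sqrt_sq_eq_abs]
      have hsa : (-1:ℝ) / Real.sqrt (1 / a ^ 2) = a := by
        rw [hsqa, abs_of_neg ha']; field_simp
      have hsqb : Real.sqrt (1 / b ^ 2) = |b|⁻¹ := by
        rw [one_div, Real.sqrt_inv, Real.sqrt_sq_eq_abs]
      have hsb : (-1:ℝ) / Real.sqrt (1 / b ^ 2) = b := by
        rw [hsqb, abs_of_neg hb']; field_simp
      have := h (-1) (Set.mem_Ioi.mpr hla) (Set.mem_Ioi.mpr hlb) hle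
      simp only [hsa, hsb] at this
      rwa [key_inv r₁ ha'.ne, key_inv r₁ hb'.ne] at this
    · intro a ha b hb hab
      have ha' : (0:ℝ) < a := ha
      have hb' : (0:ℝ) < b := hb
      have ha0 : a ≠ 0 := ha'.ne'
      have hb0 : b ≠ 0 := hb'.ne'
      have hla : (0:ℝ) < 1 / a ^ 2 := by positivity
      have hlb : (0:ℝ) < 1 / b ^ 2 := by positivity
      have hle : 1 / b ^ 2 ≤ 1 / a ^ 2 := by
        apply one_div_le_one_div_of_le (by positivity)
        nlinarith
      have hsqa : Real.sqrt (1 / a ^ 2) = |a|⁻¹ := by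
        rw [one_div, Real.sqrt_inv, Real.sqrt_sq_eq_abs]
      have hsa : (1:ℝ) / Real.sqrt (1 / a ^ 2) = a := by
        rw [hsqa, abs_of_pos ha']; field_simp
      have hsqb : Real.sqrt (1 / b ^ 2) = |b|⁻¹ := by
        rw [one_div, Real.sqrt_inv, Real.sqrt_sq_eq_abs]
      have hsb : (1:ℝ) / Real.sqrt (1 / b ^ 2) = b := by
        rw [hsqb, abs_of_pos hb']; field_simp
      have := h 1 (Set.mem_Ioi.mpr hlb) (Set.mem_Ioi.mpr hla) hle
      simp only [hsa, hsb] at this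
      rwa [key_inv r₁ hb'.ne', key_inv r₁ ha'.ne'] at this
  · rintro ⟨h1, h2⟩ x la hla lb hlb hab
    have hla' : (0:ℝ) < la := hla
    have hlb' : (0:ℝ) < lb := hlb
    by_cases hx : x = 0
    · subst hx
      simp only [zero_div]
      exact mul_le_mul_left (ENNReal.ofReal_le_ofReal hab) _
    · have hsa : 0 < Real.sqrt la := Real.sqrt_pos.mpr hla'
      have hsb : 0 < Real.sqrt lb := Real.sqrt_pos.mpr hlb'
      have hsab : Real.sqrt la ≤ Real.sqrt lb := Real.sqrt_le_sqrt hab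
      dsimp only
      rw [key_lam r₁ hx hla', key_lam r₁ hx hlb']
      apply mul_le_mul_right
      rcases lt_or_gt_of_ne hx with hneg | hpos
      · -- x < 0 : ya ≤ yb < 0, use h1
        have hya : x / Real.sqrt la < 0 := div_neg_of_neg_of_pos hneg hsa
        have hyb : x / Real.sqrt lb < 0 := div_neg_of_neg_of_pos hneg hsb
        have hyab : x / Real.sqrt la ≤ x / Real.sqrt lb := by
          rw [div_le_div_iff₀ hsa hsb]
          nlinarith
        exact h1 (Set.mem_Iio.mpr hya) (Set.mem_Iio.mpr hyb) hyab
      · have hya : 0 < x / Real.sqrt la := div_pos hpos hsa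
        have hyb : 0 < x / Real.sqrt lb := div_pos hpos hsb
        have hyab : x / Real.sqrt lb ≤ x / Real.sqrt la := by
          rw [div_le_div_iff₀ hsb hsa]
          nlinarith
        exact h2 (Set.mem_Ioi.mpr hyb) (Set.mem_Ioi.mpr hya) hyab
end
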